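/- For every integer n ≥ 3, the alternating group A_n admits a uniform cyclic group factorization with multiplicity 1; that is, there exist cyclic subgroups H_1, …, H_k of A_n such that every element g ∈ A_n has a unique expression g = h_1 h_2 ⋯ h_k with h_i ∈ H_i. -/

import Mathlib

/-- The number of ways to write `g` as an ordered product `h₁ * h₂ * ⋯ * h_k`
with `hᵢ` an element of the `i`-th member of the list `L` of subsets of `G`. -/
noncomputable def multCount {G : Type*} [Group G] (L : List (Set G)) (g : G) : ℕ :=
  Nat.card {h : List G // List.Forall₂ (· ∈ ·) h L ∧ h.prod = g}

section General

open Pointwise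

variable {G : Type*} [Group G]

/-- `L` is an exact (multiplicity-one) factorization of the set `S`. -/
def ExactList (L : List (Set G)) (S : Set G) : Prop :=
  (∀ g ∈ S, ∃ h : List G, List.Forall₂ (· ∈ ·) h L ∧ h.prod = g) ∧
  (∀ h : List G, List.Forall₂ (· ∈ ·) h L → h.prod ∈ S) ∧
  (∀ h₁ h₂ : List G, List.Forall₂ (· ∈ ·) h₁ L → List.Forall₂ (· ∈ ·) h₂ L →
    h₁.prod = h₂.prod → h₁ = h₂)

theorem exactList_nil : ExactList ([] : List (Set G)) {1} := by
  refine ⟨fun g hg => ⟨[], List.Forall₂.nil, by simpa using hg.symm⟩, ?_, ?_⟩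
  · intro h hh
    rw [List.forall₂_nil_right_iff] at hh
    subst hh; simp
  · intro h₁ h₂ hh₁ hh₂ _
    rw [List.forall₂_nil_right_iff] at hh₁ hh₂
    rw [hh₁, hh₂]

theorem exactList_cons (C : Set G) {S : Set G} {L : List (Set G)} (hL : ExactList L S)
    (hinj : ∀ x ∈ C, ∀ y ∈ C, ∀ a ∈ S, ∀ b ∈ S, x * a = y * b → x = y) :
    ExactList (C :: L) (C * S) := by
  obtain ⟨hex, hmem, huniq⟩ := hL
  refine ⟨?_, ?_, ?_⟩
  · intro g hg
    rw [Set.mem_mul] at hg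
    obtain ⟨x, hx, a, ha, hxa⟩ := hg
    obtain ⟨h, hh, hp⟩ := hex a ha
    exact ⟨x :: h, List.Forall₂.cons hx hh, by rw [List.prod_cons, hp, hxa]⟩
  · intro h hh
    rw [List.forall₂_cons_right_iff] at hh
    obtain ⟨x, l, hx, hl, rfl⟩ := hh
    rw [List.prod_cons]
    exact Set.mul_mem_mul hx (hmem l hl)
  · intro h₁ h₂ hh₁ hh₂ hp
    rw [List.forall₂_cons_right_iff] at hh₁ hh₂
    obtain ⟨x, l₁, hx, hl₁, rfl⟩ := hh₁
    obtain ⟨y, l₂, hy, hl₂, rfl⟩ := hh₂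
    rw [List.prod_cons, List.prod_cons] at hp
    have hxy : x = y := hinj x hx y hy _ (hmem l₁ hl₁) _ (hmem l₂ hl₂) hp
    subst hxy
    have : l₁.prod = l₂.prod := mul_left_cancel hp
    rw [huniq l₁ l₂ hl₁ hl₂ this]

theorem multCount_eq_one_of_exactList {L : List (Set G)} {S : Set G}
    (hL : ExactList L S) {g : G} (hg : g ∈ S) : multCount L g = 1 := by
  rw [multCount, Nat.card_eq_one_iff_unique]
  constructor
  · constructor
    rintro ⟨h₁, hf₁, hp₁⟩ ⟨h₂, hf₂, hp₂⟩
    exact Subtype.ext (hL.2.2 h₁ h₂ hf₁ hf₂ (hp₁.trans hp₂.symm))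
  · obtain ⟨h, hf, hp⟩ := hL.1 g hg
    exact ⟨⟨h, hf, hp⟩⟩

theorem pow_eq_pow_of_mod_eq {c : G} {T : ℕ} (hc : c ^ T = 1) {a b : ℕ}
    (h : a % T = b % T) : c ^ a = c ^ b := by
  have key : ∀ s : ℕ, c ^ s = c ^ (s % T) := fun s => by
    conv_lhs => rw [← Nat.div_add_mod s T, pow_add, pow_mul, hc, one_pow, one_mul]
  rw [key a, key b, h]

theorem isCyclic_zpowers (g : G) : IsCyclic (Subgroup.zpowers g) := by
  refine ⟨⟨⟨g, Subgroup.mem_zpowers g⟩, fun x => ?_⟩⟩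
  obtain ⟨m, hm⟩ := Subgroup.mem_zpowers_iff.mp x.2
  exact ⟨m, Subtype.ext (by simpa using hm)⟩

theorem exists_nat_pow_of_mem_zpowers [Finite G] {c x : G}
    (h : x ∈ Subgroup.zpowers c) : ∃ s : ℕ, x = c ^ s := by
  have := (isOfFinOrder_of_finite c).mem_powers_iff_mem_zpowers (y := x)
  obtain ⟨s, hs⟩ := this.mpr h
  exact ⟨s, hs.symm⟩

end General

section FinPerm

open Equiv Equiv.Perm

variable {m : ℕ}

theorem cr_val_le {i j : Fin (m + 1)} (hj : (j : ℕ) ≤ (i : ℕ)) :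
    ((Fin.cycleRange i j : Fin (m + 1)) : ℕ) = ((j : ℕ) + 1) % ((i : ℕ) + 1) := by
  rcases eq_or_lt_of_le hj with heq | hlt
  · have : j = i := Fin.ext heq
    subst this
    rw [Fin.cycleRange_self]
    simp [Nat.mod_self]
  · rw [Fin.coe_cycleRange_of_lt hlt, Nat.mod_eq_of_lt (by omega)]

theorem cr_pow_val (s : ℕ) {i : Fin (m + 1)} :
    ∀ j : Fin (m + 1), (j : ℕ) ≤ (i : ℕ) →
      (((Fin.cycleRange i ^ s) j : Fin (m + 1)) : ℕ) = ((j : ℕ) + s) % ((i : ℕ) + 1) := by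
  induction s with
  | zero => intro j hj; simp [Nat.mod_eq_of_lt (by omega : (j:ℕ) < (i:ℕ)+1)]
  | succ s ih =>
    intro j hj
    rw [pow_succ, Equiv.Perm.mul_apply]
    have h1 : ((Fin.cycleRange i j : Fin (m+1)) : ℕ) = ((j : ℕ) + 1) % ((i : ℕ) + 1) :=
      cr_val_le hj
    have h2 : ((Fin.cycleRange i j : Fin (m+1)) : ℕ) ≤ (i : ℕ) := by
      rw [h1]; have := Nat.mod_lt ((j:ℕ)+1) (show 0 < (i:ℕ)+1 by omega); omega
    rw [ih _ h2, h1, Nat.mod_add_mod]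
    congr 1
    omega

theorem cr_pow_fix (s : ℕ) {i j : Fin (m + 1)} (hj : (i : ℕ) < (j : ℕ)) :
    (Fin.cycleRange i ^ s) j = j := by
  induction s with
  | zero => simp
  | succ s ih =>
    rw [pow_succ', Equiv.Perm.mul_apply, ih, Fin.cycleRange_of_gt hj]

theorem cr_pow_card (i : Fin (m + 1)) : Fin.cycleRange i ^ ((i : ℕ) + 1) = 1 := by
  ext j
  by_cases hj : (j : ℕ) ≤ (i : ℕ)
  · have := cr_pow_val ((i : ℕ) + 1) j hj
    rw [Nat.add_mod_right, Nat.mod_eq_of_lt (by omega)] at this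
    simp only [Equiv.Perm.coe_one, id_eq]
    exact this
  · simp only [Equiv.Perm.coe_one, id_eq]
    exact congrArg Fin.val (cr_pow_fix ((i : ℕ) + 1) (show (i:ℕ) < (j:ℕ) by omega))

end FinPerm
section Main

open Equiv Equiv.Perm Pointwise

variable {m : ℕ}

/-- Elements of `A_{m+1}` fixing all points with index `≥ k`. -/
def FixSet (m k : ℕ) : Set (alternatingGroup (Fin (m + 1))) :=
  {σ | ∀ p : Fin (m + 1), k ≤ (p : ℕ) → (σ : Equiv.Perm (Fin (m + 1))) p = p}

theorem fixSet_two (hm : 2 ≤ m) : FixSet m 2 = {1} := by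
  ext σ
  constructor
  · intro hσ
    have hbig : ∀ p : Fin (m + 1), 2 ≤ (p : ℕ) → (σ : Perm (Fin (m + 1))) p = p := hσ
    set f := (σ : Perm (Fin (m + 1))) with hf
    have hsmall : ∀ p : Fin (m + 1), (p : ℕ) < 2 → ((f p : Fin (m + 1)) : ℕ) < 2 := by
      intro p hp
      by_contra hc
      push_neg at hc
      have h1 : f (f p) = f p := hbig (f p) hc
      have h2 : f p = p := f.injective h1
      rw [h2] at hc
      omega
    set zero : Fin (m + 1) := ⟨0, by omega⟩ with hzero
    set one : Fin (m + 1) := ⟨1, by omega⟩ with hone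
    have hz01 : (f zero : ℕ) < 2 := hsmall zero (by simp [hzero])
    rcases (show (f zero:ℕ) = 0 ∨ (f zero:ℕ) = 1 by omega) with h0 | h0
    · -- f zero = zero, so f = 1
      have hfz : f zero = zero := Fin.ext h0
      have hfo : f one = one := by
        have h1 : (f one : ℕ) < 2 := hsmall one (by simp [hone])
        rcases (show (f one:ℕ) = 0 ∨ (f one:ℕ) = 1 by omega) with h2 | h2
        · exfalso
          have : f one = f zero := by rw [hfz]; exact Fin.ext h2
          have := f.injective this
          simp [hone, hzero, Fin.ext_iff] at this
        · exact Fin.ext h2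
      have : σ = 1 := by
        apply Subtype.ext
        apply Equiv.ext
        intro p
        simp only [OneMemClass.coe_one, Perm.one_apply]
        show f p = p
        by_cases hp : 2 ≤ (p : ℕ)
        · exact hbig p hp
        · push_neg at hp
          rcases (show (p:ℕ) = 0 ∨ (p:ℕ) = 1 by omega) with h2 | h2
          · have : p = zero := Fin.ext h2
            rw [this]; exact hfz
          · have : p = one := Fin.ext h2
            rw [this]; exact hfo
      simp [this]
    · -- f zero = one, then f is the swap, contradiction with evenness
      exfalso
      have hfz : f zero = one := Fin.ext h0
      have hfo : f one = zero := by
        have h1 : (f one : ℕ) < 2 := hsmall one (by simp [hone])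
        rcases (show (f one:ℕ) = 0 ∨ (f one:ℕ) = 1 by omega) with h2 | h2
        · exact Fin.ext h2
        · exfalso
          have : f one = f zero := by rw [hfz]; exact Fin.ext h2
          have := f.injective this
          simp [hone, hzero, Fin.ext_iff] at this
      have hne : zero ≠ one := by simp [hzero, hone, Fin.ext_iff]
      have hswap : f = Equiv.swap zero one := by
        apply Equiv.ext
        intro p
        by_cases hp : 2 ≤ (p : ℕ)
        · rw [hbig p hp, Equiv.swap_apply_of_ne_of_ne]
          · intro h; rw [h] at hp; simp [hzero] at hp
          · intro h; rw [h] at hp; simp [hone] at hp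
        · push_neg at hp
          rcases (show (p:ℕ) = 0 ∨ (p:ℕ) = 1 by omega) with h2 | h2
          · have : p = zero := Fin.ext h2
            rw [this, Equiv.swap_apply_left]; exact hfz
          · have : p = one := Fin.ext h2
            rw [this, Equiv.swap_apply_right]; exact hfo
      have hsign : Perm.sign f = 1 := Equiv.Perm.mem_alternatingGroup.mp σ.2
      rw [hswap, Equiv.Perm.sign_swap hne] at hsign
      exact absurd hsign (by decide)
  · intro h
    have h1 : σ = 1 := h
    subst h1
    intro p _
    simp

end Main
section Steps

open Equiv Equiv.Perm Pointwise

variable {m : ℕ}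

theorem coe_fin_pow (x : alternatingGroup (Fin (m + 1))) (s : ℕ) :
    ((x ^ s : alternatingGroup (Fin (m + 1))) : Perm (Fin (m + 1))) = (x : Perm (Fin (m + 1))) ^ s :=
  SubgroupClass.coe_pow x s

theorem step_even {k : ℕ} (hk2 : 2 ≤ k) (hkeven : k % 2 = 0) (hkm : k < m + 1)
    {L : List (Set (alternatingGroup (Fin (m + 1))))} (hL : ExactList L (FixSet m k)) :
    ∃ c : alternatingGroup (Fin (m + 1)),
      ExactList (((Subgroup.zpowers c : Subgroup _) : Set _) :: L) (FixSet m (k + 1)) := by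
  set i : Fin (m + 1) := ⟨k, hkm⟩ with hi
  set r : Perm (Fin (m + 1)) := Fin.cycleRange i with hr
  have hsign : Perm.sign r = 1 := by
    rw [hr, Fin.sign_cycleRange, show ((i : ℕ)) = k from rfl]
    exact Even.neg_one_pow (Nat.even_iff.mpr hkeven)
  set c : alternatingGroup (Fin (m + 1)) := ⟨r, Equiv.Perm.mem_alternatingGroup.mpr hsign⟩ with hc
  have hcoe : ∀ s : ℕ, ((c ^ s : alternatingGroup (Fin (m+1))) : Perm (Fin (m + 1))) = r ^ s := by
    intro s; rw [coe_fin_pow]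
  have hival : (i : ℕ) = k := rfl
  have hc1 : c ^ (k + 1) = 1 := by
    apply Subtype.ext
    rw [hcoe]
    simpa [hival] using cr_pow_card i
  refine ⟨c, ?_⟩
  have hinj : ∀ x ∈ ((Subgroup.zpowers c : Subgroup _) : Set _), ∀ y ∈ ((Subgroup.zpowers c : Subgroup _) : Set _),
      ∀ a ∈ FixSet m k, ∀ b ∈ FixSet m k, x * a = y * b → x = y := by
    intro x hx y hy a ha b hb hxy
    obtain ⟨s, rfl⟩ := exists_nat_pow_of_mem_zpowers (SetLike.mem_coe.mp hx)
    obtain ⟨t, rfl⟩ := exists_nat_pow_of_mem_zpowers (SetLike.mem_coe.mp hy)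
    have ea : (a : Perm (Fin (m+1))) i = i := ha i (le_of_eq hival.symm)
    have eb : (b : Perm (Fin (m+1))) i = i := hb i (le_of_eq hival.symm)
    have heval : (r ^ s) i = (r ^ t) i := by
      have := congrArg (fun z : alternatingGroup (Fin (m+1)) => (z : Perm (Fin (m+1))) i) hxy
      simpa [Subgroup.coe_mul, Equiv.Perm.mul_apply, hcoe, ea, eb] using this
    have hmod : (k + s) % (k + 1) = (k + t) % (k + 1) := by
      have h1 := cr_pow_val s i (le_refl (i : ℕ))
      have h2 := cr_pow_val t i (le_refl (i : ℕ))
      rw [hival] at h1 h2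
      rw [← h1, ← h2, heval]
    have : s % (k + 1) = t % (k + 1) := Nat.ModEq.add_left_cancel' k hmod
    exact pow_eq_pow_of_mod_eq hc1 this
  have hset : ((Subgroup.zpowers c : Subgroup _) : Set _) * FixSet m k = FixSet m (k + 1) := by
    ext σ
    rw [Set.mem_mul]
    constructor
    · rintro ⟨x, hx, a, ha, rfl⟩
      obtain ⟨s, rfl⟩ := exists_nat_pow_of_mem_zpowers (SetLike.mem_coe.mp hx)
      intro p hp
      have h1 : (a : Perm (Fin (m+1))) p = p := ha p (by omega)
      show ((c ^ s * a : alternatingGroup (Fin (m+1))) : Perm (Fin (m+1))) p = p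
      rw [Subgroup.coe_mul, Equiv.Perm.mul_apply, h1, hcoe]
      exact cr_pow_fix s (by rw [hival]; omega)
    · intro hσ
      have hple : ((σ : Perm (Fin (m+1))) i : ℕ) ≤ k := by
        by_contra hcon
        push_neg at hcon
        have h1 : (σ : Perm (Fin (m+1))) ((σ : Perm (Fin (m+1))) i) = (σ : Perm (Fin (m+1))) i :=
          hσ _ (by omega)
        have h2 := (σ : Perm (Fin (m+1))).injective h1
        rw [h2] at hcon
        rw [hival] at hcon
        omega
      set s : ℕ := ((σ : Perm (Fin (m+1))) i : ℕ) + 1 with hs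
      have hci : (r ^ s) i = (σ : Perm (Fin (m+1))) i := by
        apply Fin.ext
        rw [cr_pow_val s i (le_refl _), hival]
        have : k + s = (k + 1) + ((σ : Perm (Fin (m+1))) i : ℕ) := by omega
        rw [this, Nat.add_mod_left, Nat.mod_eq_of_lt (by omega)]
      refine ⟨c ^ s, SetLike.mem_coe.mpr (Subgroup.npow_mem_zpowers c s),
        (c ^ s)⁻¹ * σ, ?_, by group⟩
      intro p hp
      show (((c ^ s)⁻¹ * σ : alternatingGroup (Fin (m+1))) : Perm (Fin (m+1))) p = p
      rw [Subgroup.coe_mul, Equiv.Perm.mul_apply]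
      rcases eq_or_lt_of_le hp with hpk | hpk
      · have hpi : p = i := Fin.ext (by rw [hival]; omega)
        subst hpi
        rw [show ((((c ^ s)⁻¹ : alternatingGroup (Fin (m+1)))) : Perm (Fin (m+1)))
            = (r ^ s)⁻¹ by rw [← hcoe s]; rfl]
        rw [← hci]
        exact Equiv.symm_apply_apply _ _
      · have h1 : (σ : Perm (Fin (m+1))) p = p := hσ p (by omega)
        rw [h1]
        rw [show ((((c ^ s)⁻¹ : alternatingGroup (Fin (m+1)))) : Perm (Fin (m+1)))
            = (r ^ s)⁻¹ by rw [← hcoe s]; rfl]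
        have h2 : (r ^ s) p = p := cr_pow_fix s (by rw [hival]; omega)
        conv_lhs => rw [← h2]
        exact Equiv.symm_apply_apply _ _
  rw [← hset]
  exact exactList_cons _ hL hinj

end Steps
section StepOdd

open Equiv Equiv.Perm Pointwise

variable {m : ℕ}

set_option maxHeartbeats 1600000 in
theorem step_odd {k : ℕ} (hk2 : 3 ≤ k) (hkodd : k % 2 = 1) (hkm : k < m + 1)
    {L : List (Set (alternatingGroup (Fin (m + 1))))} (hL : ExactList L (FixSet m k)) :
    ∃ c τ : alternatingGroup (Fin (m + 1)),
      ExactList (((Subgroup.zpowers c : Subgroup _) : Set _) ::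
        ((Subgroup.zpowers τ : Subgroup _) : Set _) :: L) (FixSet m (k + 1)) := by
  have hm3 : 3 < m + 1 := by omega
  set i : Fin (m + 1) := ⟨k, hkm⟩ with hi
  set z0 : Fin (m + 1) := ⟨0, by omega⟩ with hz0
  set z1 : Fin (m + 1) := ⟨1, by omega⟩ with hz1
  set z2 : Fin (m + 1) := ⟨2, by omega⟩ with hz2
  have hival : (i : ℕ) = k := rfl
  have hi0 : i ≠ z0 := by simp [hi, hz0, Fin.ext_iff]; omega
  have hi1 : i ≠ z1 := by simp [hi, hz1, Fin.ext_iff]; omega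
  have hi2 : i ≠ z2 := by simp [hi, hz2, Fin.ext_iff]; omega
  have h12 : z1 ≠ z2 := by simp [hz1, hz2, Fin.ext_iff]
  have h01 : z0 ≠ z1 := by simp [hz0, hz1, Fin.ext_iff]
  have h02 : z0 ≠ z2 := by simp [hz0, hz2, Fin.ext_iff]
  set r : Perm (Fin (m + 1)) := Fin.cycleRange i with hr
  set t : Perm (Fin (m + 1)) := Equiv.swap i z0 * Equiv.swap z1 z2 with ht
  -- action of t
  have ht_i : t i = z0 := by
    rw [ht, Equiv.Perm.mul_apply, Equiv.swap_apply_of_ne_of_ne hi1 hi2, Equiv.swap_apply_left]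
  have ht_z0 : t z0 = i := by
    rw [ht, Equiv.Perm.mul_apply, Equiv.swap_apply_of_ne_of_ne h01 h02, Equiv.swap_apply_right]
  have ht_z1 : t z1 = z2 := by
    rw [ht, Equiv.Perm.mul_apply, Equiv.swap_apply_left,
      Equiv.swap_apply_of_ne_of_ne (Ne.symm hi2) (Ne.symm h02)]
  have ht_z2 : t z2 = z1 := by
    rw [ht, Equiv.Perm.mul_apply, Equiv.swap_apply_right,
      Equiv.swap_apply_of_ne_of_ne (Ne.symm hi1) (Ne.symm h01)]
  have ht_fix : ∀ p : Fin (m + 1), p ≠ i → p ≠ z0 → p ≠ z1 → p ≠ z2 → t p = p := by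
    intro p h1 h2 h3 h4
    rw [ht, Equiv.Perm.mul_apply, Equiv.swap_apply_of_ne_of_ne h3 h4,
      Equiv.swap_apply_of_ne_of_ne h1 h2]
  have hz0v : (z0 : ℕ) = 0 := rfl
  have hz1v : (z1 : ℕ) = 1 := rfl
  have hz2v : (z2 : ℕ) = 2 := rfl
  have ht_fix' : ∀ p : Fin (m + 1), k + 1 ≤ (p : ℕ) → t p = p := by
    intro p hp
    apply ht_fix p
    · intro h; rw [h, hival] at hp; omega
    · intro h; rw [h, hz0v] at hp; omega
    · intro h; rw [h, hz1v] at hp; omega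
    · intro h; rw [h, hz2v] at hp; omega
  have ht_sq : t * t = 1 := by
    apply Equiv.ext
    intro p
    rw [Equiv.Perm.mul_apply, Equiv.Perm.one_apply]
    by_cases hp1 : p = i
    · rw [hp1, ht_i, ht_z0]
    by_cases hp2 : p = z0
    · rw [hp2, ht_z0, ht_i]
    by_cases hp3 : p = z1
    · rw [hp3, ht_z1, ht_z2]
    by_cases hp4 : p = z2
    · rw [hp4, ht_z2, ht_z1]
    rw [ht_fix p hp1 hp2 hp3 hp4, ht_fix p hp1 hp2 hp3 hp4]
  -- the two group elements
  have hsignc : Perm.sign (r * r) = 1 := by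
    rw [map_mul, hr, Fin.sign_cycleRange, show ((i : ℕ)) = k from rfl]
    rcases Int.units_eq_one_or ((-1 : ℤˣ) ^ k) with h | h <;> rw [h] <;> decide
  have hsignt : Perm.sign t = 1 := by
    rw [ht, map_mul, Equiv.Perm.sign_swap hi0, Equiv.Perm.sign_swap h12]
    decide
  set c : alternatingGroup (Fin (m + 1)) := ⟨r * r, Equiv.Perm.mem_alternatingGroup.mpr hsignc⟩
    with hc
  set τ : alternatingGroup (Fin (m + 1)) := ⟨t, Equiv.Perm.mem_alternatingGroup.mpr hsignt⟩
    with hτ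
  have hcoec : ∀ s : ℕ, ((c ^ s : alternatingGroup (Fin (m+1))) : Perm (Fin (m + 1)))
      = r ^ (2 * s) := by
    intro s
    rw [coe_fin_pow]
    show (r * r) ^ s = r ^ (2 * s)
    rw [← pow_two, ← pow_mul]
  have hcoeτ : ∀ s : ℕ, ((τ ^ s : alternatingGroup (Fin (m+1))) : Perm (Fin (m + 1)))
      = t ^ s := by
    intro s; rw [coe_fin_pow]
  have hτ2 : τ ^ 2 = 1 := by
    apply Subtype.ext
    rw [hcoeτ, pow_two]
    exact ht_sq
  have hτcases : ∀ x ∈ Subgroup.zpowers τ, x = 1 ∨ x = τ := by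
    intro x hx
    obtain ⟨s, rfl⟩ := exists_nat_pow_of_mem_zpowers hx
    have : τ ^ s = τ ^ (s % 2) := pow_eq_pow_of_mod_eq hτ2 (by omega)
    rcases Nat.mod_two_eq_zero_or_one s with h | h
    · left; rw [this, h, pow_zero]
    · right; rw [this, h, pow_one]
  have hrK : r ^ (k + 1) = 1 := by simpa [hival] using cr_pow_card i
  -- first extension: by τ
  have hinjτ : ∀ x ∈ ((Subgroup.zpowers τ : Subgroup _) : Set _),
      ∀ y ∈ ((Subgroup.zpowers τ : Subgroup _) : Set _),
      ∀ a ∈ FixSet m k, ∀ b ∈ FixSet m k, x * a = y * b → x = y := by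
    intro x hx y hy a ha b hb hxy
    have ea : (a : Perm (Fin (m+1))) i = i := ha i (le_of_eq hival.symm)
    have eb : (b : Perm (Fin (m+1))) i = i := hb i (le_of_eq hival.symm)
    have heval : (x : Perm (Fin (m+1))) i = (y : Perm (Fin (m+1))) i := by
      have := congrArg (fun z : alternatingGroup (Fin (m+1)) => (z : Perm (Fin (m+1))) i) hxy
      simpa [Subgroup.coe_mul, Equiv.Perm.mul_apply, ea, eb] using this
    rcases hτcases x (SetLike.mem_coe.mp hx) with rfl | rfl <;>
      rcases hτcases y (SetLike.mem_coe.mp hy) with rfl | rfl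
    · rfl
    · exfalso
      rw [OneMemClass.coe_one, Equiv.Perm.one_apply] at heval
      have : (τ : Perm (Fin (m+1))) i = t i := rfl
      rw [this, ht_i] at heval
      exact hi0 heval
    · exfalso
      rw [OneMemClass.coe_one, Equiv.Perm.one_apply] at heval
      have : (τ : Perm (Fin (m+1))) i = t i := rfl
      rw [this, ht_i] at heval
      exact hi0 heval.symm
    · rfl
  have hexτ : ExactList (((Subgroup.zpowers τ : Subgroup _) : Set _) :: L)
      (((Subgroup.zpowers τ : Subgroup _) : Set _) * FixSet m k) :=
    exactList_cons _ hL hinjτ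
  -- image of i under elements of the middle set
  have hmid : ∀ a : alternatingGroup (Fin (m+1)),
      a ∈ ((Subgroup.zpowers τ : Subgroup _) : Set _) * FixSet m k →
      ((a : Perm (Fin (m+1))) i : ℕ) = k ∨ ((a : Perm (Fin (m+1))) i : ℕ) = 0 := by
    intro a ha
    rw [Set.mem_mul] at ha
    obtain ⟨u, hu, a₀, ha₀, rfl⟩ := ha
    have e0 : (a₀ : Perm (Fin (m+1))) i = i := ha₀ i (le_of_eq hival.symm)
    rcases hτcases u (SetLike.mem_coe.mp hu) with rfl | rfl
    · left
      rw [Subgroup.coe_mul, Equiv.Perm.mul_apply, e0, OneMemClass.coe_one, Equiv.Perm.one_apply]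
    · right
      rw [Subgroup.coe_mul, Equiv.Perm.mul_apply, e0]
      have : (τ : Perm (Fin (m+1))) i = t i := rfl
      rw [this, ht_i, hz0]
  -- second extension: by c
  have hinjc : ∀ x ∈ ((Subgroup.zpowers c : Subgroup _) : Set _),
      ∀ y ∈ ((Subgroup.zpowers c : Subgroup _) : Set _),
      ∀ a ∈ ((Subgroup.zpowers τ : Subgroup _) : Set _) * FixSet m k,
      ∀ b ∈ ((Subgroup.zpowers τ : Subgroup _) : Set _) * FixSet m k,
      x * a = y * b → x = y := by
    intro x hx y hy a ha b hb hxy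
    obtain ⟨s, rfl⟩ := exists_nat_pow_of_mem_zpowers (SetLike.mem_coe.mp hx)
    obtain ⟨s', rfl⟩ := exists_nat_pow_of_mem_zpowers (SetLike.mem_coe.mp hy)
    have heval : (r ^ (2 * s)) ((a : Perm (Fin (m+1))) i)
        = (r ^ (2 * s')) ((b : Perm (Fin (m+1))) i) := by
      have := congrArg (fun z : alternatingGroup (Fin (m+1)) => (z : Perm (Fin (m+1))) i) hxy
      simpa [Subgroup.coe_mul, Equiv.Perm.mul_apply, hcoec] using this
    have hale : ((a : Perm (Fin (m+1))) i : ℕ) ≤ k := by rcases hmid a ha with h | h <;> omega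
    have hble : ((b : Perm (Fin (m+1))) i : ℕ) ≤ k := by rcases hmid b hb with h | h <;> omega
    have hmod : (((a : Perm (Fin (m+1))) i : ℕ) + 2 * s) % (k + 1)
        = (((b : Perm (Fin (m+1))) i : ℕ) + 2 * s') % (k + 1) := by
      have h1 := cr_pow_val (2 * s) ((a : Perm (Fin (m+1))) i) (by rw [hival]; exact hale)
      have h2 := cr_pow_val (2 * s') ((b : Perm (Fin (m+1))) i) (by rw [hival]; exact hble)
      rw [hival] at h1 h2
      rw [← h1, ← h2, heval]
    -- the two values of a/b at i must coincide, by parity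
    have hdvd : 2 ∣ (k + 1) := by omega
    have e1 : (((a : Perm (Fin (m+1))) i : ℕ) + 2 * s) % (k + 1) % 2
        = (((a : Perm (Fin (m+1))) i : ℕ) + 2 * s) % 2 := Nat.mod_mod_of_dvd _ hdvd
    have e2 : (((b : Perm (Fin (m+1))) i : ℕ) + 2 * s') % (k + 1) % 2
        = (((b : Perm (Fin (m+1))) i : ℕ) + 2 * s') % 2 := Nat.mod_mod_of_dvd _ hdvd
    have hpeq : ((a : Perm (Fin (m+1))) i : ℕ) = ((b : Perm (Fin (m+1))) i : ℕ) := by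
      rcases hmid a ha with h | h <;> rcases hmid b hb with h' | h' <;> omega
    rw [hpeq] at hmod
    have h2st : (2 * s) % (k + 1) = (2 * s') % (k + 1) :=
      Nat.ModEq.add_left_cancel' _ hmod
    have : r ^ (2 * s) = r ^ (2 * s') := pow_eq_pow_of_mod_eq hrK h2st
    apply Subtype.ext
    rw [hcoec, hcoec, this]
  have hsetc : ((Subgroup.zpowers c : Subgroup _) : Set _) *
      (((Subgroup.zpowers τ : Subgroup _) : Set _) * FixSet m k) = FixSet m (k + 1) := by
    ext σ
    rw [Set.mem_mul]
    constructor
    · rintro ⟨x, hx, a, ha, rfl⟩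
      obtain ⟨s, rfl⟩ := exists_nat_pow_of_mem_zpowers (SetLike.mem_coe.mp hx)
      rw [Set.mem_mul] at ha
      obtain ⟨u, hu, a₀, ha₀, rfl⟩ := ha
      intro p hp
      have hp0 : (a₀ : Perm (Fin (m+1))) p = p := ha₀ p (by omega)
      have hpt : t p = p := ht_fix' p hp
      have hpu : (u : Perm (Fin (m+1))) p = p := by
        rcases hτcases u (SetLike.mem_coe.mp hu) with rfl | rfl
        · rw [OneMemClass.coe_one, Equiv.Perm.one_apply]
        · show t p = p
          exact hpt
      show ((c ^ s * (u * a₀) : alternatingGroup (Fin (m+1))) : Perm (Fin (m+1))) p = p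
      rw [Subgroup.coe_mul, Subgroup.coe_mul, Equiv.Perm.mul_apply, Equiv.Perm.mul_apply,
        hp0, hpu, hcoec]
      exact cr_pow_fix (2 * s) (by rw [hival]; omega)
    · intro hσ
      set f : Perm (Fin (m+1)) := (σ : Perm (Fin (m+1))) with hf
      have hple : (f i : ℕ) ≤ k := by
        by_contra hcon
        push_neg at hcon
        have h1 : f (f i) = f i := hσ _ (by omega)
        have h2 := f.injective h1
        rw [h2, hival] at hcon
        omega
      rcases Nat.mod_two_eq_zero_or_one (f i : ℕ) with hpar | hpar
      · -- even target: use c^s * (τ * h)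
        set s : ℕ := (f i : ℕ) / 2 with hs
        have h2s : 2 * s = (f i : ℕ) := by omega
        have hci : (r ^ (2 * s)) z0 = f i := by
          apply Fin.ext
          rw [cr_pow_val (2 * s) z0 (by rw [hival]; simp [hz0]), hival]
          simp [hz0]
          rw [h2s, Nat.mod_eq_of_lt (by omega)]
        refine ⟨c ^ s, SetLike.mem_coe.mpr (Subgroup.npow_mem_zpowers c s),
          τ * (τ⁻¹ * ((c ^ s)⁻¹ * σ)), ?_, by group⟩
        rw [Set.mem_mul]
        refine ⟨τ, SetLike.mem_coe.mpr (Subgroup.mem_zpowers τ), τ⁻¹ * ((c ^ s)⁻¹ * σ), ?_, rfl⟩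
        intro p hp
        show ((τ⁻¹ * ((c ^ s)⁻¹ * σ) : alternatingGroup (Fin (m+1))) : Perm (Fin (m+1))) p = p
        rw [Subgroup.coe_mul, Subgroup.coe_mul, Equiv.Perm.mul_apply, Equiv.Perm.mul_apply]
        have hcinv : (((c ^ s)⁻¹ : alternatingGroup (Fin (m+1))) : Perm (Fin (m+1)))
            = (r ^ (2 * s))⁻¹ := by rw [← hcoec s]; rfl
        have hτinv : ((τ⁻¹ : alternatingGroup (Fin (m+1))) : Perm (Fin (m+1))) = t⁻¹ := rfl
        rw [hcinv, hτinv]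
        rcases eq_or_lt_of_le hp with hpk | hpk
        · have hpi : p = i := Fin.ext (by rw [hival]; omega)
          subst hpi
          have e1 : (r ^ (2 * s))⁻¹ (f i) = z0 := by
            rw [← hci]; exact Equiv.symm_apply_apply _ _
          show t⁻¹ ((r ^ (2*s))⁻¹ (f i)) = i
          rw [e1, ← ht_i]
          exact Equiv.symm_apply_apply _ _
        · have h1 : f p = p := hσ p (by omega)
          show t⁻¹ ((r ^ (2*s))⁻¹ (f p)) = p
          rw [h1]
          have h2 : (r ^ (2 * s)) p = p := cr_pow_fix (2 * s) (by rw [hival]; omega)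
          have h3 : (r ^ (2 * s))⁻¹ p = p := by
            conv_lhs => rw [← h2]
            exact Equiv.symm_apply_apply _ _
          rw [h3]
          have h4 : t p = p := ht_fix' p (by omega)
          conv_lhs => rw [← h4]
          exact Equiv.symm_apply_apply _ _
      · -- odd target: use c^s * (1 * h)
        set s : ℕ := ((f i : ℕ) + 1) / 2 with hs
        have h2s : 2 * s = (f i : ℕ) + 1 := by omega
        have hci : (r ^ (2 * s)) i = f i := by
          apply Fin.ext
          rw [cr_pow_val (2 * s) i (le_refl _), hival, h2s]
          rw [show k + ((f i : ℕ) + 1) = (k + 1) + (f i : ℕ) by omega, Nat.add_mod_left,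
            Nat.mod_eq_of_lt (by omega)]
        refine ⟨c ^ s, SetLike.mem_coe.mpr (Subgroup.npow_mem_zpowers c s),
          1 * ((c ^ s)⁻¹ * σ), ?_, by group⟩
        rw [Set.mem_mul]
        refine ⟨1, SetLike.mem_coe.mpr (Subgroup.one_mem _), (c ^ s)⁻¹ * σ, ?_, rfl⟩
        intro p hp
        show (((c ^ s)⁻¹ * σ : alternatingGroup (Fin (m+1))) : Perm (Fin (m+1))) p = p
        rw [Subgroup.coe_mul, Equiv.Perm.mul_apply]
        have hcinv : (((c ^ s)⁻¹ : alternatingGroup (Fin (m+1))) : Perm (Fin (m+1)))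
            = (r ^ (2 * s))⁻¹ := by rw [← hcoec s]; rfl
        rw [hcinv]
        rcases eq_or_lt_of_le hp with hpk | hpk
        · have hpi : p = i := Fin.ext (by rw [hival]; omega)
          subst hpi
          show (r ^ (2*s))⁻¹ (f i) = i
          rw [← hci]
          exact Equiv.symm_apply_apply _ _
        · have h1 : f p = p := hσ p (by omega)
          show (r ^ (2*s))⁻¹ (f p) = p
          rw [h1]
          have h2 : (r ^ (2 * s)) p = p := cr_pow_fix (2 * s) (by rw [hival]; omega)
          conv_lhs => rw [← h2]
          exact Equiv.symm_apply_apply _ _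
  refine ⟨c, τ, ?_⟩
  rw [← hsetc]
  exact exactList_cons _ hexτ hinjc

end StepOdd
section Conclusion

open Equiv Equiv.Perm Pointwise

theorem exists_gens (m : ℕ) (hm : 2 ≤ m) :
    ∀ k, 2 ≤ k → k ≤ m + 1 →
      ∃ gens : List (alternatingGroup (Fin (m + 1))),
        (2 < k → gens ≠ []) ∧
        ExactList (gens.map fun c => ((Subgroup.zpowers c : Subgroup _) : Set _))
          (FixSet m k) := by
  intro k hk2
  induction k, hk2 using Nat.le_induction with
  | base =>
    intro _
    refine ⟨[], by omega, ?_⟩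
    rw [List.map_nil, fixSet_two hm]
    exact exactList_nil
  | succ k hk2 ih =>
    intro hk1m
    obtain ⟨gens, _, hex⟩ := ih (by omega)
    rcases Nat.mod_two_eq_zero_or_one k with hpar | hpar
    · obtain ⟨c, hexc⟩ := step_even hk2 hpar (by omega) hex
      exact ⟨c :: gens, fun _ => by simp, hexc⟩
    · obtain ⟨c, τ, hexc⟩ := step_odd (by omega) hpar (by omega) hex
      exact ⟨c :: τ :: gens, fun _ => by simp, hexc⟩

end Conclusion

/-- For every `n ≥ 3`, the alternating group `A_n` admits a uniform cyclic group
factorization with multiplicity `1`. -/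
theorem alternatingGroup_admits_uniform_cyclic_group_factorization
    (n : ℕ) (hn : 3 ≤ n) :
    ∃ (k : ℕ) (H : Fin k → Subgroup (alternatingGroup (Fin n))),
      1 ≤ k ∧ (∀ i, IsCyclic (H i)) ∧
      ∀ g : alternatingGroup (Fin n),
        multCount (List.ofFn fun i => (H i : Set (alternatingGroup (Fin n)))) g = 1 := by
  obtain ⟨m, rfl⟩ : ∃ m, n = m + 1 := ⟨n - 1, by omega⟩
  have hm : 2 ≤ m := by omega
  obtain ⟨gens, hne, hex⟩ := exists_gens m hm (m + 1) (by omega) (le_refl _)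
  have hne' : gens ≠ [] := hne (by omega)
  refine ⟨gens.length, fun i => Subgroup.zpowers gens[(i : ℕ)],
    List.length_pos_iff.mpr hne', fun i => isCyclic_zpowers _, ?_⟩
  intro g
  have hofn : (List.ofFn fun i : Fin gens.length =>
      ((Subgroup.zpowers gens[(i : ℕ)] : Subgroup _) : Set (alternatingGroup (Fin (m + 1)))))
      = gens.map fun c => ((Subgroup.zpowers c : Subgroup _) : Set _) :=
    List.ofFn_getElem_eq_map gens (fun c => ((Subgroup.zpowers c : Subgroup _) : Set (alternatingGroup (Fin (m + 1)))))
  rw [hofn]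
  exact multCount_eq_one_of_exactList hex (fun p hp => absurd p.isLt (by omega))
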